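/- Let φ(v) = rv/(K + v) with r, K > 0, μ ∈ (0, r), γ > 0, and suppose a trajectory satisfies x' = x(φ(v(t)) − μ − γx) with x(t) bounded, x(t) > 0, and liminf of the time averages ⟨v⟩_t ≥ V̄ > 0, where v(t) ∈ [0, S]. If rV̄/(K + S) > μ, then liminf_{t→∞} ⟨x⟩_t ≥ (rV̄/(K+S) − μ)/γ > 0; in particular liminf_{t→∞} x-time-averages are strictly positive. -/

import Mathlib

open MeasureTheory intervalIntegral

/-- Proposition 3(a): persistence in time-average. If `x' = x(φ(v) - μ - γx)`
with `v(t) ∈ [0,S]`, `liminf ⟨v⟩_t ≥ V̄` and `r V̄/(K+S) > μ`, then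
`liminf ⟨x⟩_t ≥ (r V̄/(K+S) - μ)/γ > 0`. -/
theorem stmt15 (r K μ γ S Vbar C : ℝ)
    (hr : 0 < r) (hK : 0 < K) (hμ : 0 < μ) (hμr : μ < r) (hγ : 0 < γ)
    (hS : 0 < S) (hV : 0 < Vbar)
    (hcrit : μ < r * Vbar / (K + S))
    (v x : ℝ → ℝ)
    (hv : ∀ t, 0 ≤ t → v t ∈ Set.Icc 0 S)
    (hvcont : Continuous v)
    (hxpos : ∀ t, 0 ≤ t → 0 < x t) (hxbd : ∀ t, 0 ≤ t → x t ≤ C)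
    (hliminfv : Vbar ≤ Filter.liminf
      (fun t => (1 / t) * ∫ s in (0:ℝ)..t, v s) Filter.atTop)
    (hode : ∀ t, 0 ≤ t →
      HasDerivAt x (x t * (r * v t / (K + v t) - μ - γ * x t)) t) :
    (r * Vbar / (K + S) - μ) / γ ≤
      Filter.liminf (fun t => (1 / t) * ∫ s in (0:ℝ)..t, x s) Filter.atTop ∧
      0 < (r * Vbar / (K + S) - μ) / γ := by
  have hKS : (0:ℝ) < K + S := by linarith
  set c : ℝ := r / (K + S) with hc
  have hcpos : 0 < c := div_pos hr hKS
  have hx0 : 0 < x 0 := hxpos 0 le_rfl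
  have hC : 0 < C := lt_of_lt_of_le hx0 (hxbd 0 le_rfl)
  set D : ℝ := Real.log C - Real.log (x 0) with hD
  -- continuity facts
  have hxcont : ∀ t, 0 ≤ t → ContinuousOn x (Set.Icc 0 t) := by
    intro t ht s hs
    exact ((hode s hs.1).continuousAt).continuousWithinAt
  have hφcont : ∀ t, 0 ≤ t →
      ContinuousOn (fun s => r * v s / (K + v s)) (Set.Icc 0 t) := by
    intro t ht
    apply ContinuousOn.div
    · exact (continuous_const.mul hvcont).continuousOn
    · exact (continuous_const.add hvcont).continuousOn
    · intro s hs
      have h0 := (hv s hs.1).1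
      have : 0 < K + v s := by linarith
      exact ne_of_gt this
  -- FTC for log x
  have key : ∀ t, 0 ≤ t →
      (∫ s in (0:ℝ)..t, (r * v s / (K + v s) - μ - γ * x s))
        = Real.log (x t) - Real.log (x 0) := by
    intro t ht
    apply intervalIntegral.integral_eq_sub_of_hasDerivAt
    · intro s hs
      rw [Set.uIcc_of_le ht] at hs
      have hxs : x s ≠ 0 := ne_of_gt (hxpos s hs.1)
      have hd := (hode s hs.1).log hxs
      have : x s * (r * v s / (K + v s) - μ - γ * x s) / x s
          = r * v s / (K + v s) - μ - γ * x s := by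
        field_simp
      rwa [this] at hd
    · rw [intervalIntegrable_iff_integrableOn_Icc_of_le ht]
      apply ContinuousOn.integrableOn_compact isCompact_Icc
      exact ((hφcont t ht).sub continuousOn_const).sub
        (continuousOn_const.mul (hxcont t ht))
  -- main pointwise inequality: for t > 0
  have main : ∀ t, 0 < t →
      (c * ((1/t) * ∫ s in (0:ℝ)..t, v s) - μ - D * (1/t)) / γ
        ≤ (1/t) * ∫ s in (0:ℝ)..t, x s := by
    intro t ht
    have ht' : (0:ℝ) ≤ t := le_of_lt ht
    have hInt_φ : IntervalIntegrable (fun s => r * v s / (K + v s)) volume 0 t := by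
      rw [intervalIntegrable_iff_integrableOn_Icc_of_le ht']
      exact (hφcont t ht').integrableOn_compact isCompact_Icc
    have hInt_x : IntervalIntegrable x volume 0 t := by
      rw [intervalIntegrable_iff_integrableOn_Icc_of_le ht']
      exact (hxcont t ht').integrableOn_compact isCompact_Icc
    have hInt_v : IntervalIntegrable v volume 0 t := hvcont.intervalIntegrable 0 t
    -- split integral
    have hsplit : (∫ s in (0:ℝ)..t, (r * v s / (K + v s) - μ - γ * x s))
        = (∫ s in (0:ℝ)..t, r * v s / (K + v s)) - μ * t
          - γ * ∫ s in (0:ℝ)..t, x s := by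
      rw [intervalIntegral.integral_sub (hInt_φ.sub (intervalIntegrable_const))
          (hInt_x.const_mul γ),
        intervalIntegral.integral_sub hInt_φ intervalIntegrable_const,
        intervalIntegral.integral_const, intervalIntegral.integral_const_mul]
      simp only [smul_eq_mul, sub_zero]
      ring
    -- lower bound for ∫ φ(v)
    have hφv : c * (∫ s in (0:ℝ)..t, v s) ≤ ∫ s in (0:ℝ)..t, r * v s / (K + v s) := by
      rw [← intervalIntegral.integral_const_mul]
      apply intervalIntegral.integral_mono_on ht' (hInt_v.const_mul c) hInt_φ
      intro s hs
      have h0 := (hv s hs.1).1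
      have h1 := (hv s hs.1).2
      have hKv : 0 < K + v s := by linarith
      have : r * v s / (K + S) ≤ r * v s / (K + v s) :=
        div_le_div_of_nonneg_left (by positivity) hKv (by linarith)
      calc c * v s = r * v s / (K + S) := by rw [hc, div_mul_eq_mul_div]
        _ ≤ r * v s / (K + v s) := this
    -- log bound
    have hlog : Real.log (x t) - Real.log (x 0) ≤ D := by
      have : Real.log (x t) ≤ Real.log C :=
        Real.log_le_log (hxpos t ht') (hxbd t ht')
      simp only [hD]; linarith
    have h1 : c * (∫ s in (0:ℝ)..t, v s) - μ * t - D
        ≤ γ * ∫ s in (0:ℝ)..t, x s := by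
      have := key t ht'
      rw [hsplit] at this
      linarith
    have htne : t ≠ 0 := ne_of_gt ht
    rw [div_le_iff₀ hγ]
    calc c * ((1/t) * ∫ s in (0:ℝ)..t, v s) - μ - D * (1/t)
        = (c * (∫ s in (0:ℝ)..t, v s) - μ * t - D) * (1/t) := by
          field_simp
      _ ≤ (γ * ∫ s in (0:ℝ)..t, x s) * (1/t) :=
          mul_le_mul_of_nonneg_right h1 (by positivity)
      _ = ((1/t) * ∫ s in (0:ℝ)..t, x s) * γ := by ring
  -- notation
  set fx : ℝ → ℝ := fun t => (1/t) * ∫ s in (0:ℝ)..t, x s with hfx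
  set fv : ℝ → ℝ := fun t => (1/t) * ∫ s in (0:ℝ)..t, v s with hfv
  set T : ℝ := (r * Vbar / (K + S) - μ) / γ with hT
  have hTc : T = (c * Vbar - μ) / γ := by rw [hT, hc, div_mul_eq_mul_div]
  have hTpos : 0 < T := div_pos (by linarith) hγ
  refine ⟨?_, hTpos⟩
  -- v averages eventually nonneg : boundedness below
  have hvnn : ∀ᶠ t in Filter.atTop, (0:ℝ) ≤ fv t := by
    filter_upwards [Filter.eventually_gt_atTop (0:ℝ)] with t ht
    have : 0 ≤ ∫ s in (0:ℝ)..t, v s :=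
      intervalIntegral.integral_nonneg (le_of_lt ht) (fun s hs => (hv s hs.1).1)
    positivity
  have hvbdd : Filter.IsBoundedUnder (· ≥ ·) Filter.atTop fv :=
    ⟨0, by simpa [Filter.eventually_map] using hvnn⟩
  -- D/t → 0
  have hDto : Filter.Tendsto (fun t : ℝ => D * (1/t)) Filter.atTop (nhds 0) := by
    have := tendsto_inv_atTop_zero (𝕜 := ℝ) |>.const_mul D
    simpa [one_div] using this
  -- eventual lower bound for fx given ε
  have hev : ∀ ε : ℝ, 0 < ε → ∀ᶠ t in Filter.atTop, T - ε ≤ fx t := by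
    intro ε hε
    have hδ : 0 < γ * ε / (2 * c) := by positivity
    have hlt : Vbar - γ * ε / (2 * c) < Filter.liminf fv Filter.atTop :=
      lt_of_lt_of_le (by linarith) hliminfv
    have hev1 : ∀ᶠ t in Filter.atTop, Vbar - γ * ε / (2 * c) < fv t :=
      Filter.eventually_lt_of_lt_liminf hlt hvbdd
    have hev2 : ∀ᶠ t in Filter.atTop, D * (1/t) < γ * ε / 2 := by
      have := hDto.eventually (eventually_lt_nhds (show (0:ℝ) < γ * ε / 2 by positivity))
      exact this
    filter_upwards [hev1, hev2, Filter.eventually_gt_atTop (0:ℝ)] with t h1 h2 ht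
    have hmain := main t ht
    have hcne : c ≠ 0 := ne_of_gt hcpos
    have hnum : c * Vbar - μ - γ * ε ≤ c * fv t - μ - D * (1/t) := by
      have h1' : c * (Vbar - γ * ε / (2 * c)) ≤ c * fv t :=
        mul_le_mul_of_nonneg_left (le_of_lt h1) (le_of_lt hcpos)
      have hexp : c * (Vbar - γ * ε / (2 * c)) = c * Vbar - γ * ε / 2 := by
        field_simp
      nlinarith
    have hstep : T - ε ≤ (c * fv t - μ - D * (1/t)) / γ := by
      rw [hTc]
      have heq : (c * Vbar - μ) / γ - ε = (c * Vbar - μ - γ * ε) / γ := by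
        field_simp
      rw [heq]
      gcongr
    exact hstep.trans hmain
  -- boundedness above of fx (for coboundedness)
  have hxub : ∀ᶠ t in Filter.atTop, fx t ≤ C := by
    filter_upwards [Filter.eventually_gt_atTop (0:ℝ)] with t ht
    have hInt_x : IntervalIntegrable x volume 0 t := by
      rw [intervalIntegrable_iff_integrableOn_Icc_of_le (le_of_lt ht)]
      exact (hxcont t (le_of_lt ht)).integrableOn_compact isCompact_Icc
    have : (∫ s in (0:ℝ)..t, x s) ≤ ∫ s in (0:ℝ)..t, C :=
      intervalIntegral.integral_mono_on (le_of_lt ht) hInt_x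
        intervalIntegrable_const (fun s hs => hxbd s hs.1)
    rw [intervalIntegral.integral_const, smul_eq_mul] at this
    rw [hfx]
    calc (1/t) * ∫ s in (0:ℝ)..t, x s ≤ (1/t) * ((t - 0) * C) :=
        mul_le_mul_of_nonneg_left this (by positivity)
      _ = C := by field_simp; ring
  have hcob : Filter.IsCoboundedUnder (· ≥ ·) Filter.atTop fx :=
    Filter.IsBoundedUnder.isCoboundedUnder_ge ⟨C, by simpa [Filter.eventually_map] using hxub⟩
  -- conclude
  have hfinal : ∀ ε : ℝ, 0 < ε → T - ε ≤ Filter.liminf fx Filter.atTop := by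
    intro ε hε
    exact Filter.le_liminf_of_le hcob (hev ε hε)
  exact le_of_forall_sub_le hfinal
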